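/- Formal power series inversion: the formal power series f(z) = z(z+1)/(1+2z)² ∈ ℚ[[z]] has compositional inverse g(z) = (1/2)(1/√(1-4z) − 1) = Σ_{n≥1} (1/2)C(2n,n) z^n; that is, f(g(z)) = z as formal power series. -/

import Mathlib

open PowerSeries

/-- `g(z) = (1/2)(1/√(1-4z) − 1) = ∑_{n≥1} (C(2n,n)/2) zⁿ` as a formal power series over `ℚ`. -/
noncomputable def gSeries : PowerSeries ℚ :=
  PowerSeries.mk fun n => if n = 0 then 0 else ((2 * n).choose n : ℚ) / 2

noncomputable def Sser : PowerSeries ℚ := PowerSeries.mk fun n => ((2 * n).choose n : ℚ)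

lemma coeff_Sser (n : ℕ) : coeff n Sser = ((2 * n).choose n : ℚ) := coeff_mk _ _

lemma Sser_const : constantCoeff Sser = 1 := by
  rw [← coeff_zero_eq_constantCoeff, coeff_Sser]; norm_num

lemma ode : (1 - 4 * X) * (d⁄dX ℚ Sser) = 2 * Sser := by
  have h4 : (1 - 4 * X : ℚ⟦X⟧) * (d⁄dX ℚ Sser)
      = d⁄dX ℚ Sser - X * (C (R := ℚ) 4 * d⁄dX ℚ Sser) := by
    rw [map_ofNat]; ring
  have h2 : (2 : ℚ⟦X⟧) * Sser = C (R := ℚ) 2 * Sser := by rw [map_ofNat]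
  rw [h4, h2]
  ext n
  rw [map_sub, coeff_C_mul]
  cases n with
  | zero =>
    rw [coeff_zero_X_mul, sub_zero, coeff_derivative, coeff_Sser, coeff_Sser]
    norm_num
  | succ n =>
    rw [coeff_succ_X_mul, coeff_C_mul, coeff_derivative, coeff_derivative,
      coeff_Sser, coeff_Sser]
    have h := Nat.succ_mul_centralBinom_succ (n + 1)
    rw [Nat.centralBinom_eq_two_mul_choose, Nat.centralBinom_eq_two_mul_choose] at h
    have h' : ((n : ℚ) + 1 + 1) * ((2 * (n + 1 + 1)).choose (n + 1 + 1) : ℚ)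
        = 2 * (2 * ((n : ℚ) + 1) + 1) * ((2 * (n + 1)).choose (n + 1) : ℚ) := by
      exact_mod_cast congrArg (Nat.cast : ℕ → ℚ) h
    push_cast
    linear_combination h'

lemma S_sq : Sser ^ 2 * (1 - 4 * X) = 1 := by
  apply derivative.ext
  · have hX : d⁄dX ℚ (1 - 4 * X : ℚ⟦X⟧) = -4 := by
      have h1 : (1 - 4 * X : ℚ⟦X⟧) = C (R := ℚ) (-4) * X + 1 := by
        rw [map_neg, map_ofNat]; ring
      rw [h1, map_add, Derivation.map_one_eq_zero, Derivation.leibniz, derivative_C,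
        derivative_X, smul_zero, smul_eq_mul, mul_one, add_zero, add_zero, map_neg, map_ofNat]
    rw [Derivation.leibniz, Derivation.leibniz_pow, hX, Derivation.map_one_eq_zero]
    simp only [smul_eq_mul, nsmul_eq_mul, pow_one, Nat.cast_ofNat]
    linear_combination (2 * Sser) * ode
  · rw [map_mul, map_pow, Sser_const, map_sub, map_mul, map_one, constantCoeff_X]
    norm_num

/-- The formal power series `f(z) = z(z+1)/(1+2z)²` has compositional inverse
`g(z) = (1/2)(1/√(1-4z) − 1) = ∑_{n≥1} (1/2) C(2n,n) zⁿ`: one has `f(g(z)) = z`,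
i.e. `g(g+1)(1+2g)⁻² = z` as formal power series over `ℚ`. -/
theorem stmt15 :
    gSeries = PowerSeries.C (R := ℚ) (1 / 2) *
        (PowerSeries.mk (fun n => ((2 * n).choose n : ℚ)) - 1) ∧
    gSeries * (gSeries + 1) * ((1 + 2 * gSeries) ^ 2)⁻¹ = PowerSeries.X := by
  have hmk : PowerSeries.mk (fun n => ((2 * n).choose n : ℚ)) = Sser := rfl
  have h1 : (1 : ℚ⟦X⟧) + 2 * gSeries = Sser := by
    have h2 : (2 : ℚ⟦X⟧) * gSeries = C (R := ℚ) 2 * gSeries := by rw [map_ofNat]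
    rw [h2]
    ext n
    rw [map_add, coeff_C_mul, coeff_Sser]
    cases n with
    | zero => simp [gSeries]
    | succ n => simp [gSeries]; ring
  have hg : gSeries = PowerSeries.C (R := ℚ) (1 / 2) * (Sser - 1) := by
    ext n
    rw [coeff_C_mul, map_sub, coeff_Sser]
    cases n with
    | zero => simp [gSeries]
    | succ n => simp [gSeries]; ring
  refine ⟨by rw [hmk]; exact hg, ?_⟩
  have hsq : Sser ^ 2 = 1 + 4 * X * Sser ^ 2 := by linear_combination S_sq
  have h4gg : (4 : ℚ⟦X⟧) * (gSeries * (gSeries + 1)) = 4 * (X * Sser ^ 2) := by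
    linear_combination hsq + (1 + 2 * gSeries + Sser) * h1
  have h40 : (4 : ℚ⟦X⟧) ≠ 0 := fun h => by
    have := congrArg (constantCoeff (R := ℚ)) h
    rw [map_ofNat] at this
    norm_num at this
  have hgg : gSeries * (gSeries + 1) = X * Sser ^ 2 := mul_left_cancel₀ h40 h4gg
  rw [h1, hgg, mul_assoc, PowerSeries.mul_inv_cancel _ (by rw [map_pow, Sser_const]; norm_num),
    mul_one]
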